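/- Fix q ∈ (0,1) and δ > 0, and let g(x) = x·(1 − δ·(1−x)·(x−q)). If δ < 3/(1 − q + q²), then g' > 0 on [0,1], so g is strictly increasing on [0,1]. If δ > 3/(1 − q + q²), then g is bimodal: g has exactly two critical points in (0,1), namely c_l = (1+q)/3 − (1/3)·√((δ(1+q)² − 3qδ − 3)/δ) and c_r = (1+q)/3 + (1/3)·√((δ(1+q)² − 3qδ − 3)/δ), with g strictly increasing on [0, c_l], strictly decreasing on [c_l, c_r], and strictly increasing on [c_r, 1]. -/

import Mathlib

set_option maxHeartbeats 1000000


/-- Fix `q ∈ (0,1)` and `δ > 0`, and let `g x = x * (1 − δ*(1−x)*(x−q))`.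
If `δ < 3/(1 − q + q²)` then `g' > 0` on `[0,1]`, so `g` is strictly increasing
on `[0,1]`.  If `δ > 3/(1 − q + q²)` then `g` is bimodal: it has exactly two
critical points in `(0,1)`, namely
`c_l = (1+q)/3 − (1/3)√((δ(1+q)² − 3qδ − 3)/δ)` and
`c_r = (1+q)/3 + (1/3)√((δ(1+q)² − 3qδ − 3)/δ)`,
with `g` strictly increasing on `[0, c_l]`, strictly decreasing on `[c_l, c_r]`,
and strictly increasing on `[c_r, 1]`. -/
theorem ppi_monotone_or_bimodal (q δ : ℝ) (hq : q ∈ Set.Ioo (0:ℝ) 1) (hδ : 0 < δ)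
    (g : ℝ → ℝ)
    (hg : ∀ x : ℝ, g x = x * (1 - δ * (1 - x) * (x - q))) :
    (δ < 3 / (1 - q + q ^ 2) →
      (∀ x ∈ Set.Icc (0:ℝ) 1, 0 < deriv g x) ∧ StrictMonoOn g (Set.Icc (0:ℝ) 1)) ∧
    (3 / (1 - q + q ^ 2) < δ →
      (1 + q) / 3 - (1 / 3) * Real.sqrt ((δ * (1 + q) ^ 2 - 3 * q * δ - 3) / δ) ∈
        Set.Ioo (0:ℝ) 1 ∧
      (1 + q) / 3 + (1 / 3) * Real.sqrt ((δ * (1 + q) ^ 2 - 3 * q * δ - 3) / δ) ∈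
        Set.Ioo (0:ℝ) 1 ∧
      (1 + q) / 3 - (1 / 3) * Real.sqrt ((δ * (1 + q) ^ 2 - 3 * q * δ - 3) / δ) <
        (1 + q) / 3 + (1 / 3) * Real.sqrt ((δ * (1 + q) ^ 2 - 3 * q * δ - 3) / δ) ∧
      (∀ x ∈ Set.Ioo (0:ℝ) 1, deriv g x = 0 ↔
        (x = (1 + q) / 3 - (1 / 3) * Real.sqrt ((δ * (1 + q) ^ 2 - 3 * q * δ - 3) / δ) ∨
         x = (1 + q) / 3 + (1 / 3) * Real.sqrt ((δ * (1 + q) ^ 2 - 3 * q * δ - 3) / δ))) ∧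
      StrictMonoOn g
        (Set.Icc 0 ((1 + q) / 3 - (1 / 3) * Real.sqrt ((δ * (1 + q) ^ 2 - 3 * q * δ - 3) / δ))) ∧
      StrictAntiOn g
        (Set.Icc ((1 + q) / 3 - (1 / 3) * Real.sqrt ((δ * (1 + q) ^ 2 - 3 * q * δ - 3) / δ))
                 ((1 + q) / 3 + (1 / 3) * Real.sqrt ((δ * (1 + q) ^ 2 - 3 * q * δ - 3) / δ))) ∧
      StrictMonoOn g
        (Set.Icc ((1 + q) / 3 + (1 / 3) * Real.sqrt ((δ * (1 + q) ^ 2 - 3 * q * δ - 3) / δ)) 1)) := by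

  obtain ⟨hq0, hq1⟩ := hq
  have hgfun : g = fun x => x * (1 - δ * (1 - x) * (x - q)) := funext hg
  have hA : (0:ℝ) < 1 - q + q ^ 2 := by nlinarith [sq_nonneg (2*q - 1)]
  have hD : ∀ x : ℝ, HasDerivAt g (3*δ*x^2 - 2*δ*(1+q)*x + (1 + q*δ)) x := by
    intro x
    rw [hgfun]
    have h1 := (hasDerivAt_id x).mul ((hasDerivAt_const x 1).sub
        (((hasDerivAt_const x δ).mul ((hasDerivAt_const x 1).sub (hasDerivAt_id x))).mul
          ((hasDerivAt_id x).sub (hasDerivAt_const x q))))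
    simp only [id] at h1
    have h2 : HasDerivAt (fun y => y * (1 - δ * (1 - y) * (y - q)))
        (1 * (1 - δ * (1 - x) * (x - q)) + x * (0 - ((0 * (1 - x) + δ * (0 - 1)) * (x - q)
          + δ * (1 - x) * (1 - 0)))) x := h1
    convert h2 using 1
    ring
  have hderiv : ∀ x : ℝ, deriv g x = 3*δ*x^2 - 2*δ*(1+q)*x + (1 + q*δ) :=
    fun x => (hD x).deriv
  have hcont : Continuous g := by rw [hgfun]; continuity
  constructor
  · intro hlt
    have h3 : δ * (1 - q + q ^ 2) < 3 := (lt_div_iff₀ hA).mp hlt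
    have hpos : ∀ x : ℝ, 0 < deriv g x := by
      intro x
      rw [hderiv]
      nlinarith [mul_nonneg hδ.le (sq_nonneg (3*x - (1+q)))]
    refine ⟨fun x _ => hpos x, ?_⟩
    exact strictMonoOn_of_deriv_pos (convex_Icc 0 1) hcont.continuousOn
      (fun x _ => hpos x)
  · intro hgt
    set t : ℝ := (δ * (1 + q) ^ 2 - 3 * q * δ - 3) / δ with ht
    set s := Real.sqrt t with hsdef
    have h3 : 3 < δ * (1 - q + q ^ 2) := (div_lt_iff₀ hA).mp hgt
    have htpos : 0 < t := by rw [ht]; exact div_pos (by nlinarith) hδ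
    have hspos : 0 < s := Real.sqrt_pos.mpr htpos
    have hs2 : s ^ 2 = t := Real.sq_sqrt htpos.le
    set cl := (1 + q) / 3 - 1 / 3 * s with hcl
    set cr := (1 + q) / 3 + 1 / 3 * s with hcr
    have hs1 : s < 1 + q := by
      rw [hsdef]
      rw [show (1+q : ℝ) = Real.sqrt ((1+q)^2) by
        rw [Real.sqrt_sq (by linarith)]]
      apply Real.sqrt_lt_sqrt htpos.le
      rw [ht, div_lt_iff₀ hδ]
      nlinarith
    have hs3 : s < 2 - q := by
      rw [hsdef]
      rw [show (2-q : ℝ) = Real.sqrt ((2-q)^2) by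
        rw [Real.sqrt_sq (by linarith)]]
      apply Real.sqrt_lt_sqrt htpos.le
      rw [ht, div_lt_iff₀ hδ]
      nlinarith
    have hcl0 : 0 < cl := by rw [hcl]; linarith
    have hcl1 : cl < 1 := by rw [hcl]; linarith
    have hcr0 : 0 < cr := by rw [hcr]; linarith
    have hcr1 : cr < 1 := by rw [hcr]; linarith
    have hclcr : cl < cr := by rw [hcl, hcr]; linarith
    have hδs : δ * s ^ 2 = δ * (1 + q) ^ 2 - 3 * q * δ - 3 := by
      rw [hs2, ht]; field_simp
    have hfac : ∀ x : ℝ, deriv g x = 3 * δ * (x - cl) * (x - cr) := by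
      intro x
      rw [hderiv, hcl, hcr]
      linear_combination (1/3 : ℝ) * hδs
    refine ⟨⟨hcl0, hcl1⟩, ⟨hcr0, hcr1⟩, hclcr, ?_, ?_, ?_, ?_⟩
    · intro x _
      rw [hfac x]
      constructor
      · intro h0
        rcases mul_eq_zero.mp h0 with h | h
        · rcases mul_eq_zero.mp h with h' | h'
          · exfalso; nlinarith
          · left; linarith [sub_eq_zero.mp h']
        · right; linarith [sub_eq_zero.mp h]
      · rintro (rfl | rfl) <;> ring
    · apply strictMonoOn_of_deriv_pos (convex_Icc _ _) hcont.continuousOn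
      intro x hx
      rw [interior_Icc] at hx
      rw [hfac x]
      nlinarith [mul_pos_of_neg_of_neg (show x - cl < 0 by linarith [hx.2])
        (show x - cr < 0 by linarith [hx.2, hclcr]), hδ]
    · apply strictAntiOn_of_deriv_neg (convex_Icc _ _) hcont.continuousOn
      intro x hx
      rw [interior_Icc] at hx
      rw [hfac x]
      nlinarith [mul_neg_of_pos_of_neg (show 0 < x - cl by linarith [hx.1])
        (show x - cr < 0 by linarith [hx.2]), hδ]
    · apply strictMonoOn_of_deriv_pos (convex_Icc _ _) hcont.continuousOn
      intro x hx
      rw [interior_Icc] at hx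
      nlinarith [hfac x, mul_pos (show 0 < x - cl by linarith [hx.1, hclcr])
        (show 0 < x - cr by linarith [hx.1]), hδ]
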